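/- If spark(φ) > 2s and both x and z are solutions of φw = y with ‖x‖₀ ≤ s and ‖z‖₀ ≤ s, then x = z; equivalently the map x ↦ φx restricted to the set of s-sparse vectors is injective if and only if the kernel of φ contains no nonzero 2s-sparse vector. -/

import Mathlib

noncomputable def l0 {N : ℕ} (x : Fin N → ℝ) : ℕ := Nat.card {i : Fin N // x i ≠ 0}

noncomputable def spark {P N : ℕ} (φ : Matrix (Fin P) (Fin N) ℝ) : ℕ :=
  sInf {k | ∃ x : Fin N → ℝ, x ≠ 0 ∧ φ.mulVec x = 0 ∧ l0 x = k}

lemma l0_eq_card {N : ℕ} (x : Fin N → ℝ) :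
    l0 x = (Finset.univ.filter (fun i => x i ≠ 0)).card := by
  rw [l0, Nat.card_eq_fintype_card, Fintype.card_subtype]

lemma l0_mono {N : ℕ} {x z : Fin N → ℝ} (h : ∀ i, x i ≠ 0 → z i ≠ 0) :
    l0 x ≤ l0 z := by
  rw [l0_eq_card, l0_eq_card]
  apply Finset.card_le_card
  intro i hi
  simp only [Finset.mem_filter, Finset.mem_univ, true_and] at *
  exact h i hi

lemma l0_neg {N : ℕ} (x : Fin N → ℝ) : l0 (-x) = l0 x := by
  simp only [l0_eq_card]
  congr 1
  ext i
  simp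

lemma l0_sub_le {N : ℕ} (x z : Fin N → ℝ) : l0 (x - z) ≤ l0 x + l0 z := by
  rw [l0_eq_card, l0_eq_card, l0_eq_card]
  refine le_trans (Finset.card_le_card (t := (Finset.univ.filter (fun i => x i ≠ 0)) ∪
    (Finset.univ.filter (fun i => z i ≠ 0))) ?_) (Finset.card_union_le _ _)
  intro i hi
  simp only [Finset.mem_filter, Finset.mem_union, Finset.mem_univ, true_and,
    Pi.sub_apply] at *
  by_contra h
  push_neg at h
  rw [h.1, h.2] at hi
  simp at hi

theorem stmt_15 {P N : ℕ} (φ : Matrix (Fin P) (Fin N) ℝ) (s : ℕ) (y : Fin P → ℝ) :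
    (2 * s < spark φ →
      ∀ x z : Fin N → ℝ, φ.mulVec x = y → φ.mulVec z = y →
        l0 x ≤ s → l0 z ≤ s → x = z) ∧
    ((∀ x₁ x₂ : Fin N → ℝ, l0 x₁ ≤ s → l0 x₂ ≤ s →
        φ.mulVec x₁ = φ.mulVec x₂ → x₁ = x₂) ↔
      (∀ v : Fin N → ℝ, v ≠ 0 → φ.mulVec v = 0 → ¬ l0 v ≤ 2 * s)) := by
  constructor
  · intro hspark x z hx hz hxs hzs
    by_contra hne
    have hv : x - z ≠ 0 := sub_ne_zero.mpr hne
    have hker : φ.mulVec (x - z) = 0 := by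
      rw [Matrix.mulVec_sub, hx, hz, sub_self]
    have hmem : l0 (x - z) ∈ {k | ∃ w : Fin N → ℝ, w ≠ 0 ∧ φ.mulVec w = 0 ∧ l0 w = k} :=
      ⟨x - z, hv, hker, rfl⟩
    have h1 : spark φ ≤ l0 (x - z) := Nat.sInf_le hmem
    have h2 : l0 (x - z) ≤ 2 * s := le_trans (l0_sub_le x z) (by omega)
    omega
  · constructor
    · intro hinj v hv hker hl0
      classical
      set T := Finset.univ.filter (fun i => v i ≠ 0) with hT
      have hTcard : T.card ≤ 2 * s := by rw [← l0_eq_card]; exact hl0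
      obtain ⟨S, hS, hScard⟩ := Finset.exists_subset_card_eq (s := T) (n := min s T.card) (min_le_right _ _)
      set v₁ : Fin N → ℝ := fun i => if i ∈ S then v i else 0 with hv₁
      set v₂ : Fin N → ℝ := v - v₁ with hv₂
      have hl1 : l0 v₁ ≤ s := by
        rw [l0_eq_card]
        refine le_trans (Finset.card_le_card (t := S) ?_) (by omega)
        intro i hi
        simp only [Finset.mem_filter, Finset.mem_univ, true_and, hv₁] at hi
        by_contra h
        simp [h] at hi
      have hl2 : l0 v₂ ≤ s := by
        rw [l0_eq_card]
        refine le_trans (Finset.card_le_card (t := T \ S) ?_) ?_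
        · intro i hi
          simp only [Finset.mem_filter, Finset.mem_univ, true_and, hv₂, hv₁,
            Pi.sub_apply] at hi
          simp only [Finset.mem_sdiff]
          by_cases h : i ∈ S
          · simp [h] at hi
          · simp only [h, if_neg, ite_false, sub_zero] at hi
            exact ⟨by simp [hT, hi], h⟩
        · rw [Finset.card_sdiff_of_subset hS, hScard]
          omega
      have heq : φ.mulVec v₁ = φ.mulVec (-v₂) := by
        have : φ.mulVec v₂ = φ.mulVec v - φ.mulVec v₁ := by
          rw [hv₂, Matrix.mulVec_sub]
        rw [Matrix.mulVec_neg, this, hker, zero_sub, neg_neg]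
      have := hinj v₁ (-v₂) hl1 (by rw [l0_neg]; exact hl2) heq
      apply hv
      have : v₁ + v₂ = 0 := by rw [this]; ring
      have hvsum : v = v₁ + v₂ := by rw [hv₂]; ring
      rw [hvsum, this]
    · intro hker x₁ x₂ h1 h2 heq
      by_contra hne
      have hv : x₁ - x₂ ≠ 0 := sub_ne_zero.mpr hne
      exact hker (x₁ - x₂) hv (by rw [Matrix.mulVec_sub, heq, sub_self])
        (le_trans (l0_sub_le x₁ x₂) (by omega))
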